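/- The Nisio semigroup S(t)u := sup_{π∈P_t} E_π u is the least upper bound of the family (S_λ)_{λ∈Λ}: (i) S_λ(t)u ≤ S(t)u pointwise for all λ, t, u; and (ii) if T = (T(t)) is any semigroup of monotone operators with S_λ(t)u ≤ T(t)u for all λ, t, u, then S(t)u ≤ T(t)u for all t, u. -/

import Mathlib

noncomputable def applyPart {M : Type*} (E : ℝ → (M → ℝ) → (M → ℝ)) :
    List ℝ → (M → ℝ) → (M → ℝ)
  | a :: b :: rest, u => E (b - a) (applyPart E (b :: rest) u)
  | _, u => u

noncomputable def Epart {M : Type*} (E : ℝ → (M → ℝ) → (M → ℝ))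
    (π : Finset ℝ) (u : M → ℝ) : M → ℝ :=
  applyPart E (π.sort (· ≤ ·)) u

def PartsOf (t : ℝ) : Set (Finset ℝ) :=
  {π | 0 ∈ π ∧ t ∈ π ∧ ∀ s ∈ π, 0 ≤ s ∧ s ≤ t}

noncomputable def Nisio {M : Type*} (E : ℝ → (M → ℝ) → (M → ℝ))
    (t : ℝ) (u : M → ℝ) (x : M) : ℝ :=
  ⨆ π : PartsOf t, Epart E π.1 u x

lemma sorted_le_getLast : ∀ (l : List ℝ) (hl : l ≠ []), l.Pairwise (· ≤ ·) →
    ∀ b ∈ l, b ≤ l.getLast hl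
  | [], hl, _, _, _ => absurd rfl hl
  | [a], _, _, b, hb => by simp_all
  | a :: c :: rest, _, hs, b, hb => by
    rw [List.getLast_cons (by simp)]
    rcases List.mem_cons.1 hb with rfl | hb
    · exact le_trans (List.rel_of_pairwise_cons hs (a' := c) (by simp))
        (sorted_le_getLast (c :: rest) (by simp) hs.of_cons c (by simp))
    · exact sorted_le_getLast (c :: rest) (by simp) hs.of_cons b hb

lemma applyPart_le_T {M : Type*} (E T : ℝ → (M → ℝ) → (M → ℝ))
    (hET : ∀ h, 0 ≤ h → ∀ (v : M → ℝ) (x : M), E h v x ≤ T h v x)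
    (hTid : ∀ u : M → ℝ, T 0 u = u)
    (hTsg : ∀ s t, 0 ≤ s → 0 ≤ t → ∀ u : M → ℝ, T (s + t) u = T s (T t u))
    (hTmono : ∀ t, 0 ≤ t → ∀ u v : M → ℝ, (∀ x, u x ≤ v x) → ∀ x, T t u x ≤ T t v x) :
    ∀ (l : List ℝ) (a : ℝ), (a :: l).Pairwise (· ≤ ·) → ∀ (u : M → ℝ) (x : M),
      applyPart E (a :: l) u x ≤ T ((a :: l).getLast (by simp) - a) u x
  | [], a, _, u, x => by simp [applyPart, hTid]
  | b :: rest, a, hs, u, x => by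
    have hab : a ≤ b := List.rel_of_pairwise_cons hs (a' := b) (by simp)
    have hbl : b ≤ (b :: rest).getLast (by simp) :=
      sorted_le_getLast _ (by simp) hs.of_cons b (by simp)
    have h1 : applyPart E (a :: b :: rest) u x
        = E (b - a) (applyPart E (b :: rest) u) x := rfl
    have h2 := hET (b - a) (by linarith) (applyPart E (b :: rest) u) x
    have h3 : ∀ y, applyPart E (b :: rest) u y
        ≤ T ((b :: rest).getLast (by simp) - b) u y := fun y =>
      applyPart_le_T E T hET hTid hTsg hTmono rest b hs.of_cons u y
    have h4 := hTmono (b - a) (by linarith) _ _ h3 x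
    have h5 : T (b - a) (T ((b :: rest).getLast (by simp) - b) u) x
        = T ((a :: b :: rest).getLast (by simp) - a) u x := by
      rw [← hTsg (b - a) _ (by linarith) (by linarith)]
      rw [List.getLast_cons (by simp : (b :: rest) ≠ [])]
      ring_nf
    rw [h1, ← h5]
    exact le_trans h2 h4

theorem stmt5 {M Λ : Type*} [Nonempty Λ]
    (S : Λ → ℝ → (M → ℝ) → (M → ℝ))
    (hid : ∀ l (u : M → ℝ), S l 0 u = u)
    (hsg : ∀ l s t, 0 ≤ s → 0 ≤ t → ∀ u : M → ℝ, S l (s + t) u = S l s (S l t u))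
    (hadd : ∀ l h (u v : M → ℝ), S l h (u + v) = S l h u + S l h v)
    (hsmul : ∀ l h (c : ℝ) (u : M → ℝ), S l h (c • u) = c • S l h u)
    (hmono : ∀ l h, 0 ≤ h → ∀ u v : M → ℝ, (∀ x, u x ≤ v x) → ∀ x, S l h u x ≤ S l h v x)
    (hbdd : ∀ h (u : M → ℝ) (x : M), BddAbove (Set.range fun l => S l h u x))
    (E : ℝ → (M → ℝ) → (M → ℝ))
    (hE : ∀ h (u : M → ℝ) (x : M), E h u x = ⨆ l, S l h u x)
    (hbddN : ∀ t (u : M → ℝ) (x : M),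
      BddAbove (Set.range fun π : PartsOf t => Epart E π.1 u x)) :
    -- (i) the Nisio semigroup dominates each `S_λ`
    (∀ l t, 0 ≤ t → ∀ (u : M → ℝ) (x : M), S l t u x ≤ Nisio E t u x) ∧
    -- (ii) it is below any semigroup of monotone operators dominating each `S_λ`
    (∀ T : ℝ → (M → ℝ) → (M → ℝ),
      (∀ u : M → ℝ, T 0 u = u) →
      (∀ s t, 0 ≤ s → 0 ≤ t → ∀ u : M → ℝ, T (s + t) u = T s (T t u)) →
      (∀ t, 0 ≤ t → ∀ u v : M → ℝ, (∀ x, u x ≤ v x) → ∀ x, T t u x ≤ T t v x) →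
      (∀ l t, 0 ≤ t → ∀ (u : M → ℝ) (x : M), S l t u x ≤ T t u x) →
      ∀ t, 0 ≤ t → ∀ (u : M → ℝ) (x : M), Nisio E t u x ≤ T t u x) := by
  constructor
  · intro l t ht u x
    rcases eq_or_lt_of_le ht with rfl | htpos
    · have hmem : ({0} : Finset ℝ) ∈ PartsOf 0 := by
        refine ⟨by simp, by simp, ?_⟩; intro s hs; simp_all
      have hEq : Epart E {0} u x = u x := by
        simp [Epart, Finset.sort_singleton, applyPart]
      have := le_ciSup (hbddN 0 u x) (⟨{0}, hmem⟩ : PartsOf 0)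
      rw [hid l u]
      calc u x = Epart E {0} u x := hEq.symm
        _ ≤ _ := this
    · have hmem : (insert 0 {t} : Finset ℝ) ∈ PartsOf t := by
        refine ⟨by simp, by simp, ?_⟩
        intro s hs
        simp only [Finset.mem_insert, Finset.mem_singleton] at hs
        rcases hs with rfl | rfl <;> constructor <;> linarith
      have hsort : (insert 0 {t} : Finset ℝ).sort (· ≤ ·) = [0, t] := by
        rw [Finset.sort_insert (· ≤ ·) (by intro b hb; simp at hb; simp [hb, ht])
          (by simp [htpos.ne]), Finset.sort_singleton]
      have hEq : Epart E (insert 0 {t}) u x = E t u x := by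
        simp [Epart, hsort, applyPart]
      have h1 : S l t u x ≤ E t u x := by
        rw [hE]; exact le_ciSup (hbdd t u x) l
      have h2 := le_ciSup (hbddN t u x) (⟨insert 0 {t}, hmem⟩ : PartsOf t)
      rw [hEq] at h2
      exact le_trans h1 h2
  · intro T hTid hTsg hTmono hST t ht u x
    have hne : Nonempty (PartsOf t) := by
      refine ⟨⟨insert 0 {t}, by simp, by simp, ?_⟩⟩
      intro s hs
      simp only [Finset.mem_insert, Finset.mem_singleton] at hs
      rcases hs with rfl | rfl <;> constructor <;> linarith
    refine ciSup_le ?_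
    rintro ⟨π, h0, htm, hbnd⟩
    have hET : ∀ h, 0 ≤ h → ∀ (v : M → ℝ) (y : M), E h v y ≤ T h v y := by
      intro h hh v y
      rw [hE]
      exact ciSup_le fun l => hST l h hh v y
    set L := π.sort (· ≤ ·) with hL
    have hsorted : L.Pairwise (· ≤ ·) := Finset.pairwise_sort _ _
    have h0L : (0 : ℝ) ∈ L := Finset.mem_sort (· ≤ ·) |>.2 h0
    have htL : t ∈ L := Finset.mem_sort (· ≤ ·) |>.2 htm
    match hLe : L with
    | [] => simp_all
    | a :: rest =>
      have key := applyPart_le_T E T hET hTid hTsg hTmono rest a hsorted u x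
      have ha : a = 0 := by
        rcases List.mem_cons.1 h0L with h | h
        · exact h.symm
        · have h1 : a ≤ 0 := List.rel_of_pairwise_cons hsorted (a' := 0) h
          have h2 : (0:ℝ) ≤ a := by
            refine (hbnd a ?_).1
            rw [← Finset.mem_sort (α := ℝ) (· ≤ ·), ← hL]
            exact List.mem_cons_self (a := a) (l := rest)
          linarith
      have hlast : (a :: rest).getLast (by simp) = t := by
        have h1 : (a :: rest).getLast (by simp) ≤ t := by
          refine (hbnd _ ?_).2
          rw [← Finset.mem_sort (α := ℝ) (· ≤ ·), ← hL]
          exact List.getLast_mem (by simp)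
        have h2 : t ≤ (a :: rest).getLast (by simp) :=
          sorted_le_getLast _ (by simp) hsorted t htL
        linarith
      calc Epart E π u x = applyPart E (a :: rest) u x := by
            simp only [Epart, ← hL]
        _ ≤ T ((a :: rest).getLast (by simp) - a) u x := key
        _ = T t u x := by rw [hlast, ha, sub_zero]
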